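/- Fix β>0 and θ∈ℝ. For every t>0, x≥0 and every real λ>−c̃^θ_t, one has e^{−x c^θ_t} + ∫_0^∞ e^{−λy} q^θ_t(x,y) dy = e^{−x u^θ(λ,t)} (all quantities finite). In particular, taking λ=0, e^{−x c^θ_t} + ∫_0^∞ q^θ_t(x,y) dy = 1, so that q^θ_t(x,dy) = e^{−x c^θ_t} δ_0(dy) + q^θ_t(x,y) dy is a probability measure on [0,∞). -/

import Mathlib

open MeasureTheory Filter
open Set

/-- `c^θ_t` from the paper, with time-scale parameter `β`. -/
noncomputable def cc (β θ t : ℝ) : ℝ :=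
  if θ = 0 then 1 / (β * t) else 2 * θ / (Real.exp (2 * β * θ * t) - 1)

/-- `c̃^θ_t` from the paper. -/
noncomputable def cct (β θ t : ℝ) : ℝ :=
  if θ = 0 then 1 / (β * t) else 2 * θ / (1 - Real.exp (-(2 * β * θ * t)))

/-- `u^θ(λ, t)` from the paper. -/
noncomputable def uu (β θ l t : ℝ) : ℝ :=
  if t = 0 then l else l * cc β θ t / (cct β θ t + l)

/-- entrance density `q^θ_t(x)`. -/
noncomputable def qe (β θ t x : ℝ) : ℝ :=
  cc β θ t * cct β θ t * Real.exp (-(cct β θ t * x))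

/-- transition density `q^θ_t(x, y)`. -/
noncomputable def qt (β θ t x y : ℝ) : ℝ :=
  x * cc β θ t * cct β θ t * Real.exp (-((x + y) * cc β θ t) - 2 * θ * y) *
    ∑' k : ℕ, (x * y * cc β θ t * cct β θ t) ^ k /
      ((Nat.factorial k : ℝ) * (Nat.factorial (k + 1) : ℝ))

/-- the space-time harmonic function `m^{α,θ}(t, z)`. -/
noncomputable def mm (β θ α t z : ℝ) : ℝ :=
  z * Real.exp (-(α / cc β θ t)) *
    ∑' i : ℕ, (α * z) ^ i * Real.exp (((i : ℝ) + 1) * (2 * β * θ * t)) /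
      ((Nat.factorial i : ℝ) * (Nat.factorial (i + 1) : ℝ))

/-- the space-time harmonic function `m̃^{α,θ}(t, z)`. -/
noncomputable def mmt (β θ α t z : ℝ) : ℝ :=
  z * Real.exp (2 * θ * z) * Real.exp (-(α / cct β θ t)) *
    ∑' i : ℕ, (α * z) ^ i * Real.exp (-(((i : ℝ) + 1) * (2 * β * θ * t))) /
      ((Nat.factorial i : ℝ) * (Nat.factorial (i + 1) : ℝ))

lemma exp_tsum' (r : ℝ) : Real.exp r = ∑' n : ℕ, r ^ n / (Nat.factorial n : ℝ) := by
  rw [Real.exp_eq_exp_ℝ, NormedSpace.exp_eq_tsum_div]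

lemma summable_fac (z : ℝ) :
    Summable (fun k : ℕ => z ^ k / ((Nat.factorial k : ℝ) * (Nat.factorial (k+1) : ℝ))) := by
  refine Summable.of_norm ?_
  refine Summable.of_nonneg_of_le (fun k => norm_nonneg _) (fun k => ?_)
    (Real.summable_pow_div_factorial |z|)
  rw [norm_div, norm_pow, Real.norm_eq_abs]
  rw [Real.norm_of_nonneg (by positivity)]
  refine div_le_div_of_nonneg_left (by positivity) (by positivity) ?_
  exact le_mul_of_one_le_right (by positivity) (Nat.one_le_cast.2 (Nat.factorial_pos _))

lemma pow_exp_int {a : ℝ} (ha : 0 < a) (k : ℕ) :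
    IntegrableOn (fun y : ℝ => y ^ k * Real.exp (-(a * y))) (Set.Ioi 0) volume ∧
    ∫ y in Set.Ioi (0:ℝ), y ^ k * Real.exp (-(a * y))
      = (Nat.factorial k : ℝ) / a ^ (k + 1) := by
  constructor
  · have h1 : IntegrableOn (fun x : ℝ => Real.exp (-x) * x ^ k) (Ioi 0) volume := by
      have h := Real.GammaIntegral_convergent (s := (k : ℝ) + 1) (by positivity)
      refine h.congr_fun (fun x hx => ?_) measurableSet_Ioi
      rw [show ((k : ℝ) + 1) - 1 = (k : ℝ) by ring]; simp only [Real.rpow_natCast]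
    have h2 : IntegrableOn (fun y : ℝ => Real.exp (-(a * y)) * (a * y) ^ k) (Ioi 0) volume := by
      have := (integrableOn_Ioi_comp_mul_left_iff
        (fun x : ℝ => Real.exp (-x) * x ^ k) 0 ha).2 (by simpa using h1)
      simpa using this
    have h3 : IntegrableOn
        (fun y : ℝ => ((a : ℝ) ^ k)⁻¹ * (Real.exp (-(a * y)) * (a * y) ^ k)) (Ioi 0) volume :=
      h2.const_mul _
    refine h3.congr_fun (fun y hy => ?_) measurableSet_Ioi
    have hak : (a : ℝ) ^ k ≠ 0 := by positivity
    field_simp [mul_pow]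
    ring
  · have h := Real.integral_rpow_mul_exp_neg_mul_Ioi (a := (k : ℝ) + 1) (r := a)
      (by positivity) ha
    rw [show ∫ t : ℝ in Ioi 0, t ^ ((k : ℝ) + 1 - 1) * Real.exp (-(a * t))
        = ∫ y : ℝ in Ioi 0, y ^ k * Real.exp (-(a * y)) from
      setIntegral_congr_fun measurableSet_Ioi (fun x hx => by
        rw [show ((k : ℝ) + 1) - 1 = (k : ℝ) by ring, Real.rpow_natCast])] at h
    rw [h, Real.Gamma_nat_eq_factorial k,
      show ((k : ℝ) + 1) = ((k + 1 : ℕ) : ℝ) by push_cast; ring,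
      Real.rpow_natCast, one_div, inv_pow]
    ring


lemma cc_pos {β θ t : ℝ} (hβ : 0 < β) (ht : 0 < t) : 0 < cc β θ t := by
  rw [cc]
  rcases eq_or_ne θ 0 with h | h
  · rw [if_pos h]; positivity
  rw [if_neg h]
  rcases h.lt_or_gt with hθ | hθ
  · have h1 : 2 * β * θ * t < 0 := by nlinarith [mul_pos (mul_pos hβ (neg_pos.2 hθ)) ht]
    have h2 : Real.exp (2 * β * θ * t) < 1 := by
      rw [← Real.exp_zero]; exact Real.exp_lt_exp.2 h1
    apply div_pos_of_neg_of_neg <;> nlinarith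
  · have h1 : (0:ℝ) < 2 * β * θ * t := by positivity
    have h2 : 1 < Real.exp (2 * β * θ * t) := by
      rw [← Real.exp_zero]; exact Real.exp_lt_exp.2 h1
    apply div_pos <;> nlinarith

lemma cct_pos {β θ t : ℝ} (hβ : 0 < β) (ht : 0 < t) : 0 < cct β θ t := by
  rw [cct]
  rcases eq_or_ne θ 0 with h | h
  · rw [if_pos h]; positivity
  rw [if_neg h]
  rcases h.lt_or_gt with hθ | hθ
  · have h1 : 0 < -(2 * β * θ * t) := by nlinarith [mul_pos (mul_pos hβ (neg_pos.2 hθ)) ht]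
    have h2 : 1 < Real.exp (-(2 * β * θ * t)) := by
      rw [← Real.exp_zero]; exact Real.exp_lt_exp.2 h1
    apply div_pos_of_neg_of_neg <;> nlinarith
  · have h1 : -(2 * β * θ * t) < 0 := by nlinarith [mul_pos (mul_pos hβ hθ) ht]
    have h2 : Real.exp (-(2 * β * θ * t)) < 1 := by
      rw [← Real.exp_zero]; exact Real.exp_lt_exp.2 h1
    apply div_pos <;> nlinarith

lemma cct_eq {β θ t : ℝ} (hβ : 0 < β) (ht : 0 < t) : cct β θ t = cc β θ t + 2 * θ := by
  rcases eq_or_ne θ 0 with h | h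
  · rw [cct, cc, if_pos h, if_pos h, h]; ring
  rw [cct, cc, if_neg h, if_neg h]
  have ha : 2 * β * θ * t ≠ 0 := by
    intro h0
    rcases mul_eq_zero.1 h0 with h1 | h1
    · rcases mul_eq_zero.1 h1 with h2 | h2
      · rcases mul_eq_zero.1 h2 with h3 | h3 <;> simp_all
      · exact h h2
    · linarith
  have hE : Real.exp (2 * β * θ * t) ≠ 1 := fun hc => ha ((Real.exp_eq_one_iff _).1 hc)
  have hE0 : Real.exp (2 * β * θ * t) ≠ 0 := (Real.exp_pos _).ne'
  rw [Real.exp_neg]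
  have hd1 : Real.exp (2 * β * θ * t) - 1 ≠ 0 := sub_ne_zero.2 hE
  have hd2 : 1 - (Real.exp (2 * β * θ * t))⁻¹ ≠ 0 := by
    rw [sub_ne_zero]
    intro hc
    apply hE
    rw [← inv_inv (Real.exp (2 * β * θ * t)), ← hc, inv_one]
  have hkey : 1 - (Real.exp (2 * β * θ * t))⁻¹
      = (Real.exp (2 * β * θ * t) - 1) / Real.exp (2 * β * θ * t) := by
    rw [eq_div_iff hE0, sub_mul, inv_mul_cancel₀ hE0, one_mul]
  rw [hkey, div_div_eq_mul_div, div_add' _ _ _ hd1]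
  congr 1
  ring

lemma key (β θ t x : ℝ) (hβ : 0 < β) (ht : 0 < t) (hx : 0 ≤ x) (l : ℝ) (hl : -cct β θ t < l) :
    IntegrableOn (fun y => Real.exp (-(l*y)) * qt β θ t x y) (Ioi 0) volume ∧
    Real.exp (-(x * cc β θ t)) + ∫ y in Ioi (0:ℝ), Real.exp (-(l*y)) * qt β θ t x y
      = Real.exp (-(x * (l * cc β θ t / (cct β θ t + l)))) := by
  have hc := cc_pos (β := β) (θ := θ) (t := t) hβ ht
  have hd := cct_pos (β := β) (θ := θ) (t := t) hβ ht
  have hsum := cct_eq (β := β) (θ := θ) (t := t) hβ ht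
  set c := cc β θ t with hcdef
  set d := cct β θ t with hddef
  set a := d + l with hadef
  have ha : 0 < a := by rw [hadef]; linarith
  set g : ℕ → ℝ → ℝ := fun k y =>
    (x * c * d * Real.exp (-(x * c))) *
      ((x * y * c * d) ^ k / ((Nat.factorial k : ℝ) * (Nat.factorial (k+1) : ℝ))) *
      Real.exp (-(a * y)) with hgdef
  -- pointwise identity
  have hpt : ∀ y : ℝ, Real.exp (-(l * y)) * qt β θ t x y = ∑' k : ℕ, g k y := by
    intro y
    have e1 : Real.exp (-(l * y)) * Real.exp (-((x + y) * c) - 2 * θ * y)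
        = Real.exp (-(x * c)) * Real.exp (-(a * y)) := by
      rw [← Real.exp_add, ← Real.exp_add]
      congr 1
      have h2 : a = c + 2 * θ + l := by rw [hadef, hsum]
      linear_combination y * h2
    simp only [hgdef]
    rw [tsum_mul_right, tsum_mul_left, qt]
    rw [← hcdef, ← hddef]
    set S := ∑' k : ℕ, (x * y * c * d) ^ k /
      ((Nat.factorial k : ℝ) * (Nat.factorial (k+1) : ℝ)) with hS
    linear_combination (x * c * d * S) * e1
  -- separated form
  have hsep : ∀ k : ℕ, ∀ y : ℝ, g k y
      = ((x * c * d * Real.exp (-(x * c))) * ((x * c * d) ^ k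
          / ((Nat.factorial k : ℝ) * (Nat.factorial (k+1) : ℝ))))
        * (y ^ k * Real.exp (-(a * y))) := by
    intro k y
    simp only [hgdef]
    rw [show x * y * c * d = (x * c * d) * y by ring, mul_pow]
    ring
  -- per-term integrability
  have hgint : ∀ k : ℕ, IntegrableOn (g k) (Ioi 0) volume := by
    intro k
    have h5 := (pow_exp_int ha k).1.const_mul
      ((x * c * d * Real.exp (-(x * c))) * ((x * c * d) ^ k
        / ((Nat.factorial k : ℝ) * (Nat.factorial (k+1) : ℝ))))
    exact IntegrableOn.congr_fun h5 (fun y _ => (hsep k y).symm) measurableSet_Ioi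
  -- per-term integral value
  set r := x * c * d / a with hrdef
  have hr0 : 0 ≤ r := by positivity
  have hgval : ∀ k : ℕ, ∫ y in Ioi (0:ℝ), g k y
      = Real.exp (-(x * c)) * (r ^ (k+1) / (Nat.factorial (k+1) : ℝ)) := by
    intro k
    rw [setIntegral_congr_fun measurableSet_Ioi (fun y _ => hsep k y),
      integral_const_mul, (pow_exp_int ha k).2, hrdef, div_pow]
    have h1 : (Nat.factorial k : ℝ) ≠ 0 := Nat.cast_ne_zero.2 (Nat.factorial_pos _).ne'
    have h2 : (Nat.factorial (k+1) : ℝ) ≠ 0 := Nat.cast_ne_zero.2 (Nat.factorial_pos _).ne'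
    have h3 : a ^ (k+1) ≠ 0 := by positivity
    field_simp
    ring
  -- nonnegativity on Ioi 0
  have hgnn : ∀ k : ℕ, ∀ y ∈ Ioi (0:ℝ), 0 ≤ g k y := by
    intro k y hy
    have hy' : (0:ℝ) ≤ y := (le_of_lt hy)
    simp only [hgdef]
    have : (0:ℝ) ≤ (x * y * c * d) ^ k := by positivity
    positivity
  -- norm integrals
  have hgnorm : ∀ k : ℕ, ∫ y in Ioi (0:ℝ), ‖g k y‖
      = Real.exp (-(x * c)) * (r ^ (k+1) / (Nat.factorial (k+1) : ℝ)) := by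
    intro k
    rw [← hgval k]
    exact setIntegral_congr_fun measurableSet_Ioi
      (fun y hy => Real.norm_of_nonneg (hgnn k y hy))
  -- summability of norm integrals
  have hsum2 : Summable (fun k : ℕ => ∫ y in Ioi (0:ℝ), ‖g k y‖) := by
    have h1 : Summable (fun k : ℕ => r ^ (k+1) / (Nat.factorial (k+1) : ℝ)) :=
      (Real.summable_pow_div_factorial r).comp_injective Nat.succ_injective
    exact (h1.mul_left _).congr (fun k => (hgnorm k).symm)
  -- pointwise summability
  have hptsum : ∀ y : ℝ, Summable (fun k : ℕ => g k y) := by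
    intro y
    have : (fun k : ℕ => g k y) = fun k : ℕ =>
        ((x * c * d * Real.exp (-(x * c))) * Real.exp (-(a * y))) *
          ((x * y * c * d) ^ k / ((Nat.factorial k : ℝ) * (Nat.factorial (k+1) : ℝ))) := by
      funext k; simp only [hgdef]; ring
    rw [this]
    exact (summable_fac _).mul_left _
  -- measurability of the total function
  have hmeas : AEStronglyMeasurable (fun y => Real.exp (-(l * y)) * qt β θ t x y)
      (volume.restrict (Ioi 0)) := by
    have hcont : ∀ k : ℕ, Continuous (g k) := by
      intro k
      simp only [hgdef]
      fun_prop
    refine aestronglyMeasurable_of_tendsto_ae (u := atTop)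
      (f := fun n y => ∑ k ∈ Finset.range n, g k y) (fun n => ?_) ?_
    · exact (continuous_finset_sum _ (fun k _ => hcont k)).aestronglyMeasurable
    · refine Filter.Eventually.of_forall (fun y => ?_)
      rw [hpt y]
      exact (hptsum y).hasSum.tendsto_sum_nat
  -- finiteness
  have hfin : HasFiniteIntegral (fun y => Real.exp (-(l * y)) * qt β θ t x y)
      (volume.restrict (Ioi 0)) := by
    rw [hasFiniteIntegral_iff_norm]
    have heq : ∫⁻ y in Ioi (0:ℝ), ENNReal.ofReal ‖Real.exp (-(l * y)) * qt β θ t x y‖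
        = ∫⁻ y in Ioi (0:ℝ), ∑' k : ℕ, ENNReal.ofReal (g k y) := by
      refine lintegral_congr_ae ?_
      filter_upwards [ae_restrict_mem measurableSet_Ioi] with y hy
      rw [hpt y, Real.norm_of_nonneg (tsum_nonneg (fun k => hgnn k y hy)),
        ENNReal.ofReal_tsum_of_nonneg (fun k => hgnn k y hy) (hptsum y)]
    rw [heq, lintegral_tsum (fun k => ((hgint k).1.aemeasurable.ennreal_ofReal))]
    have h2 : ∀ k : ℕ, ∫⁻ y in Ioi (0:ℝ), ENNReal.ofReal (g k y)
        = ENNReal.ofReal (∫ y in Ioi (0:ℝ), g k y) := by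
      intro k
      rw [← ofReal_integral_eq_lintegral_ofReal (hgint k)
        ((ae_restrict_iff' measurableSet_Ioi).2 (Filter.Eventually.of_forall (hgnn k)))]
    simp_rw [h2]
    have h3 : Summable (fun k : ℕ => ∫ y in Ioi (0:ℝ), g k y) := by
      refine hsum2.congr (fun k => ?_)
      rw [hgnorm k, hgval k]
    rw [← ENNReal.ofReal_tsum_of_nonneg
      (fun k => setIntegral_nonneg measurableSet_Ioi (hgnn k)) h3]
    exact ENNReal.ofReal_lt_top
  have hInt : IntegrableOn (fun y => Real.exp (-(l * y)) * qt β θ t x y) (Ioi 0) volume :=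
    ⟨hmeas, hfin⟩
  refine ⟨hInt, ?_⟩
  -- compute the integral
  have hintval : ∫ y in Ioi (0:ℝ), Real.exp (-(l * y)) * qt β θ t x y
      = Real.exp (-(x * c)) * (Real.exp r - 1) := by
    rw [show (fun y => Real.exp (-(l * y)) * qt β θ t x y) = fun y => ∑' k : ℕ, g k y
      from funext hpt]
    rw [← integral_tsum_of_summable_integral_norm hgint hsum2]
    simp_rw [hgval]
    rw [tsum_mul_left]
    congr 1
    have h0 := Real.summable_pow_div_factorial r
    have h1 := Summable.tsum_eq_zero_add h0
    rw [← exp_tsum' r] at h1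
    simp only [pow_zero, Nat.factorial_zero, Nat.cast_one, div_one] at h1
    linarith
  rw [hintval]
  have hne : d + l ≠ 0 := by linarith
  rw [show Real.exp (-(x * c)) + Real.exp (-(x * c)) * (Real.exp r - 1)
      = Real.exp (-(x * c)) * Real.exp r by ring, ← Real.exp_add]
  congr 1
  rw [hrdef, hadef]
  field_simp
  ring

/-- Laplace transform of the transition kernel: for `t > 0`, `x ≥ 0` and `λ > -c̃^θ_t`,
`e^{-x c^θ_t} + ∫_0^∞ e^{-λy} q^θ_t(x,y) dy = e^{-x u^θ(λ,t)}` (with the integral finite);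
in particular, taking `λ = 0`, `e^{-x c^θ_t} + ∫_0^∞ q^θ_t(x,y) dy = 1`, so that
`q^θ_t(x, dy) = e^{-x c^θ_t} δ_0(dy) + q^θ_t(x,y) dy` is a probability measure on `[0, ∞)`. -/
theorem transition_laplace (β θ : ℝ) (hβ : 0 < β) (t : ℝ) (ht : 0 < t)
    (x : ℝ) (hx : 0 ≤ x) (l : ℝ) (hl : -cct β θ t < l) :
    MeasureTheory.IntegrableOn (fun y => Real.exp (-(l * y)) * qt β θ t x y)
      (Set.Ioi 0) MeasureTheory.volume ∧
    Real.exp (-(x * cc β θ t)) + (∫ y in Set.Ioi (0 : ℝ), Real.exp (-(l * y)) * qt β θ t x y)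
      = Real.exp (-(x * uu β θ l t)) ∧
    Real.exp (-(x * cc β θ t)) + (∫ y in Set.Ioi (0 : ℝ), qt β θ t x y) = 1 ∧
    MeasureTheory.IsProbabilityMeasure
      ((ENNReal.ofReal (Real.exp (-(x * cc β θ t)))) • MeasureTheory.Measure.dirac (0 : ℝ) +
        (MeasureTheory.volume.restrict (Set.Ioi (0 : ℝ))).withDensity
          (fun y => ENNReal.ofReal (qt β θ t x y))) := by
  have hc := cc_pos (θ := θ) hβ ht
  have hd := cct_pos (θ := θ) hβ ht
  obtain ⟨h1, h2⟩ := key β θ t x hβ ht hx l hl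
  obtain ⟨h30, h3⟩ := key β θ t x hβ ht hx 0 (by linarith)
  have hqfun : (fun y : ℝ => Real.exp (-(0 * y)) * qt β θ t x y)
      = fun y => qt β θ t x y := by
    funext y; simp
  rw [hqfun] at h30 h3
  simp only [zero_mul, zero_div, mul_zero, neg_zero, Real.exp_zero, add_zero] at h3
  have hqnn : ∀ y ∈ Set.Ioi (0:ℝ), 0 ≤ qt β θ t x y := by
    intro y hy
    have hy' : (0:ℝ) ≤ y := le_of_lt hy
    rw [qt]
    have ht1 : 0 ≤ ∑' k : ℕ, (x * y * cc β θ t * cct β θ t) ^ k /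
        ((Nat.factorial k : ℝ) * (Nat.factorial (k + 1) : ℝ)) :=
      tsum_nonneg (fun k => by positivity)
    have ht2 : (0:ℝ) ≤ x * cc β θ t * cct β θ t *
        Real.exp (-((x + y) * cc β θ t) - 2 * θ * y) := by positivity
    exact mul_nonneg ht2 ht1
  refine ⟨h1, ?_, h3, ?_⟩
  · rw [uu, if_neg ht.ne']
    exact h2
  · constructor
    have hae : 0 ≤ᵐ[MeasureTheory.volume.restrict (Set.Ioi 0)] fun y => qt β θ t x y :=
      (ae_restrict_iff' measurableSet_Ioi).2 (Filter.Eventually.of_forall hqnn)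
    have hlint : ∫⁻ y, ENNReal.ofReal (qt β θ t x y)
          ∂(MeasureTheory.volume.restrict (Set.Ioi 0))
        = ENNReal.ofReal (∫ y in Set.Ioi (0:ℝ), qt β θ t x y) :=
      (ofReal_integral_eq_lintegral_ofReal h30 hae).symm
    simp only [Measure.add_apply, Measure.smul_apply, smul_eq_mul,
      Measure.dirac_apply_of_mem (Set.mem_univ (0:ℝ)), mul_one,
      withDensity_apply _ MeasurableSet.univ, Measure.restrict_univ]
    rw [hlint, ← ENNReal.ofReal_add (Real.exp_pos _).le
      (setIntegral_nonneg measurableSet_Ioi hqnn), h3, ENNReal.ofReal_one]
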